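/- arXiv:1310.2104 — 2 statements merged into one kernel-verified Lean document; each statement's English description precedes it below -/
import Mathlib

section
/- For every nonnegative integer n, Ĉ P_n^{(k)}(x;λ,μ) = Σ_{l=0}^{n} C(n,l) · Ĉ_{n-l}^{(k)} · S_l(x;λ,μ), where Ĉ_m^{(k)} = Ĉ_m^{(k)}(0) are the poly-Cauchy numbers of the second kind. -/
open PowerSeries Finset

noncomputable section

/-- The formal power series log(1+t). -/
def logS : PowerSeries ℝ :=
  PowerSeries.mk fun n => if n = 0 then 0 else (-1) ^ (n + 1) / n

/-- Composition of formal power series (valid when `g` has zero constant term). -/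
def compS (f g : PowerSeries ℝ) : PowerSeries ℝ :=
  PowerSeries.mk fun n =>
    ∑ m ∈ Finset.range (n + 1), (PowerSeries.coeff m f) * PowerSeries.coeff n (g ^ m)

/-- The formal power series (1+t)^x = Σ (x)_n t^n / n!. -/
def onePow (x : ℝ) : PowerSeries ℝ :=
  PowerSeries.mk fun n => (descPochhammer ℝ n).eval x / n.factorial

/-- The polylogarithm factorial function Lif_k(t) = Σ t^n/(n!(n+1)^k). -/
def Lif (k : ℤ) : PowerSeries ℝ :=
  PowerSeries.mk fun n => 1 / (n.factorial * ((n : ℝ) + 1) ^ k)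

/-- The Peters factor (1+(1+t)^λ)^(-μ) = 2^(-μ) exp(-μ log(1 + ((1+t)^λ - 1)/2)). -/
def peters (lam mu : ℝ) : PowerSeries ℝ :=
  PowerSeries.C ((2 : ℝ) ^ (-mu)) *
    compS (PowerSeries.exp ℝ)
      (PowerSeries.C (-mu) * compS logS (PowerSeries.C (1 / 2) * (onePow lam - 1)))

/-- The Peters polynomials S_n(x;λ,μ). -/
def petersPoly (lam mu x : ℝ) (n : ℕ) : ℝ :=
  n.factorial * PowerSeries.coeff n (peters lam mu * onePow x)

/-- Poly-Cauchy polynomials of the first kind C_n^{(k)}(x). -/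
def pC (k : ℤ) (x : ℝ) (n : ℕ) : ℝ :=
  n.factorial * PowerSeries.coeff n (compS (Lif k) logS * onePow (-x))

/-- Poly-Cauchy polynomials of the second kind Ĉ_n^{(k)}(x). -/
def pChat (k : ℤ) (x : ℝ) (n : ℕ) : ℝ :=
  n.factorial * PowerSeries.coeff n (compS (Lif k) (-logS) * onePow x)

/-- The poly-Cauchy of the first kind and Peters mixed-type polynomials CP_n^{(k)}(x;λ,μ). -/
def CP (k : ℤ) (lam mu x : ℝ) (n : ℕ) : ℝ :=
  n.factorial * PowerSeries.coeff n (peters lam mu * compS (Lif k) logS * onePow (-x))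

/-- The poly-Cauchy of the second kind and Peters mixed-type polynomials ĈP_n^{(k)}(x;λ,μ). -/
def CPhat (k : ℤ) (lam mu x : ℝ) (n : ℕ) : ℝ :=
  n.factorial * PowerSeries.coeff n (peters lam mu * compS (Lif k) (-logS) * onePow x)

/-- Signed Stirling numbers of the first kind: (x)_n = Σ_l s(n,l) x^l. -/
def stirS (n l : ℕ) : ℝ := (descPochhammer ℝ n).coeff l


lemma onePow_zero' : onePow (0:ℝ) = 1 := by
  ext n
  cases n with
  | zero => simp [onePow, PowerSeries.coeff_one]
  | succ m =>
      simp [onePow, PowerSeries.coeff_one, descPochhammer_succ_left]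

theorem CPhat_eq_sum_polyCauchyNum_mul_peters (k : ℤ) (lam mu x : ℝ) (n : ℕ) :
    CPhat k lam mu x n =
      ∑ l ∈ Finset.range (n + 1),
        (n.choose l : ℝ) * pChat k 0 (n - l) * petersPoly lam mu x l := by
  unfold CPhat pChat petersPoly
  rw [onePow_zero']
  have h : peters lam mu * compS (Lif k) (-logS) * onePow x
      = (peters lam mu * onePow x) * compS (Lif k) (-logS) := by ring
  rw [h, PowerSeries.coeff_mul, Finset.Nat.sum_antidiagonal_eq_sum_range_succ_mk,
    Finset.mul_sum]
  refine Finset.sum_congr rfl fun l hl => ?_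
  have hln : l ≤ n := Nat.lt_succ_iff.mp (Finset.mem_range.mp hl)
  have hfac : (n.choose l : ℝ) * l.factorial * (n - l).factorial = n.factorial := by
    exact_mod_cast congrArg (Nat.cast : ℕ → ℝ)
      (Nat.choose_mul_factorial_mul_factorial hln)
  rw [mul_one]
  rw [← hfac]; ring
end
end

section
/- For every positive integer n, the derivative formula d/dx Ĉ P_n^{(k)}(x;λ,μ) = n! · Σ_{l=0}^{n-1} ((-1)^{n-l-1} / ((n-l)·l!)) · Ĉ P_l^{(k)}(x;λ,μ) holds. -/
open PowerSeries Finset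

noncomputable section

namespace DerivAux

open Polynomial

noncomputable def cc (j l : ℕ) : ℝ :=
  (-1) ^ (j - l - 1) * j.factorial / (((j - l : ℕ) : ℝ) * l.factorial)

lemma fac_ne (i : ℕ) : ((i.factorial : ℝ)) ≠ 0 := by
  exact_mod_cast i.factorial_ne_zero

lemma cc_top (i : ℕ) : cc (i + 1 + 1) (i + 1) = cc (i + 1) i + 1 := by
  have h1 : (i + 1 + 1) - (i + 1) = 1 := by omega
  have h2 : (i + 1) - i = 1 := by omega
  simp only [cc, h1, h2, Nat.factorial_succ]
  have := fac_ne i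
  push_cast
  field_simp

lemma cc_zero (i : ℕ) : cc (i + 1 + 1) 0 = -((((i + 1) - 0 : ℕ) : ℝ) * cc (i + 1) 0) := by
  have h1 : (i + 1 + 1) - 0 = i + 2 := by omega
  have h2 : (i + 1) - 0 = i + 1 := by omega
  have h3 : (i + 1 + 1) - 0 - 1 = i + 1 := by omega
  have h4 : (i + 1) - 0 - 1 = i := by omega
  simp only [cc, h1, h2, h3, h4, Nat.factorial_succ, Nat.factorial_zero]
  have hi1 : ((i:ℝ) + 1) ≠ 0 := by positivity
  have hi2 : ((i:ℝ) + 2) ≠ 0 := by positivity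
  have := fac_ne i
  push_cast
  field_simp
  ring

lemma cc_mid (l m : ℕ) :
    cc (l + m + 1 + 1 + 1) (l + 1) =
      cc (l + m + 1 + 1) l - (((l + m + 1 + 1) - (l + 1) : ℕ) : ℝ) * cc (l + m + 1 + 1) (l + 1) := by
  have h1 : (l + m + 1 + 1) - l = m + 2 := by omega
  have h2 : (l + m + 1 + 1) - (l + 1) = m + 1 := by omega
  have h3 : (l + m + 1 + 1 + 1) - (l + 1) = m + 2 := by omega
  have h4 : (l + m + 1 + 1) - l - 1 = m + 1 := by omega
  have h5 : (l + m + 1 + 1) - (l + 1) - 1 = m := by omega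
  have h6 : (l + m + 1 + 1 + 1) - (l + 1) - 1 = m + 1 := by omega
  simp only [cc, h1, h2, h3, h4, h5, h6]
  have e1 : (l + m + 1 + 1 + 1).factorial = (l + m + 3) * (l + m + 2).factorial := by
    rw [show l + m + 1 + 1 + 1 = (l + m + 2) + 1 from by omega, Nat.factorial_succ]
  have e2 : (l + 1).factorial = (l + 1) * l.factorial := Nat.factorial_succ _
  have e3 : (l + m + 1 + 1).factorial = (l + m + 2).factorial := by norm_num
  rw [e1, e2, e3]
  have := fac_ne l
  have := fac_ne (l + m + 2)
  have hm1 : ((m:ℝ) + 1) ≠ 0 := by positivity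
  have hl1 : ((l:ℝ) + 1) ≠ 0 := by positivity
  push_cast
  field_simp
  ring

lemma derivative_descPochhammer (j : ℕ) :
    (descPochhammer ℝ j).derivative =
      ∑ l ∈ range j, Polynomial.C (cc j l) * descPochhammer ℝ l := by
  induction j with
  | zero => simp
  | succ j ih =>
    rw [descPochhammer_succ_right, derivative_mul, ih, derivative_sub, Polynomial.derivative_X,
      Polynomial.derivative_natCast, sub_zero, mul_one]
    rcases j with _ | i
    · norm_num [cc]
    · have key : ∀ l ∈ range (i + 1),
          (Polynomial.C (cc (i + 1) l) * descPochhammer ℝ l) * (Polynomial.X - ((i + 1 : ℕ) : ℝ[X])) =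
            Polynomial.C (cc (i + 1) l) * descPochhammer ℝ (l + 1) -
              Polynomial.C ((((i + 1) - l : ℕ) : ℝ) * cc (i + 1) l) * descPochhammer ℝ l := by
        intro l hl
        rw [mem_range] at hl
        have hc : ((i + 1 : ℕ) : ℝ[X]) = (l : ℝ[X]) + Polynomial.C ((((i + 1) - l : ℕ)) : ℝ) := by
          rw [C_eq_natCast, ← Nat.cast_add]
          congr 1
          omega
        rw [descPochhammer_succ_right, hc, C_mul]
        ring
      rw [Finset.sum_mul, Finset.sum_congr rfl key, Finset.sum_sub_distrib,
        Finset.sum_range_succ, Finset.sum_range_succ']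
      conv_rhs => rw [Finset.sum_range_succ', Finset.sum_range_succ]
      have hC : ∀ l ∈ range i,
          Polynomial.C (cc (i + 1 + 1) (l + 1)) * descPochhammer ℝ (l + 1) =
            Polynomial.C (cc (i + 1) l) * descPochhammer ℝ (l + 1) -
              Polynomial.C ((((i + 1) - (l + 1) : ℕ) : ℝ) * cc (i + 1) (l + 1)) * descPochhammer ℝ (l + 1) := by
        intro l hl
        rw [mem_range] at hl
        obtain ⟨m, rfl⟩ : ∃ m, i = l + m + 1 := ⟨i - l - 1, by omega⟩
        rw [cc_mid l m, map_sub, sub_mul, C_mul]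
      rw [Finset.sum_congr rfl hC, Finset.sum_sub_distrib, cc_top, cc_zero, map_add, map_one,
        map_neg]
      ring

lemma coeff_logS_onePow (m : ℕ) (x : ℝ) :
    (PowerSeries.coeff m) (logS * onePow x) =
      ((descPochhammer ℝ m).derivative.eval x) / m.factorial := by
  rw [PowerSeries.coeff_mul, Finset.Nat.sum_antidiagonal_eq_sum_range_succ_mk,
    derivative_descPochhammer, Finset.sum_range_succ', eval_finset_sum]
  simp only [logS, onePow, PowerSeries.coeff_mk, if_true, zero_mul, add_zero, eval_mul, eval_C,
    Nat.succ_ne_zero, if_false, if_pos]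
  rw [Finset.sum_div]
  have hre := Finset.sum_range_reflect
    (fun l => cc m l * Polynomial.eval x (descPochhammer ℝ l) / (m.factorial : ℝ)) m
  rw [← hre]
  refine Finset.sum_congr rfl fun q hq => ?_
  rw [mem_range] at hq
  obtain ⟨l, rfl⟩ : ∃ l, m = q + l + 1 := ⟨m - q - 1, by omega⟩
  have h1 : q + l + 1 - (q + 1) = l := by omega
  have h2 : q + l + 1 - 1 - q = l := by omega
  have h3 : (q + l + 1) - l = q + 1 := by omega
  have h4 : (q + l + 1) - l - 1 = q := by omega
  simp only [h1, h2, cc, h3, h4, if_neg (Nat.succ_ne_zero q)]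
  have := fac_ne l
  have := fac_ne (q + l + 1)
  have hq1 : ((q:ℝ) + 1) ≠ 0 := by positivity
  push_cast
  rw [pow_succ, pow_succ]
  field_simp

lemma deriv_coeff (G : PowerSeries ℝ) (n : ℕ) (x : ℝ) :
    deriv (fun y => (PowerSeries.coeff n) (G * onePow y)) x =
      (PowerSeries.coeff n) (G * (logS * onePow x)) := by
  have hfun : (fun y => (PowerSeries.coeff n) (G * onePow y)) =
      fun y => ∑ q ∈ range (n + 1), (PowerSeries.coeff q) G *
        ((descPochhammer ℝ (n - q)).eval y / ((n - q).factorial : ℝ)) := by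
    funext y
    rw [PowerSeries.coeff_mul, Finset.Nat.sum_antidiagonal_eq_sum_range_succ_mk]
    simp only [onePow, PowerSeries.coeff_mk]
  rw [hfun, deriv_fun_sum (fun i _ =>
    (((descPochhammer ℝ (n - i)).differentiableAt).div_const _).const_mul _)]
  rw [PowerSeries.coeff_mul, Finset.Nat.sum_antidiagonal_eq_sum_range_succ_mk]
  refine Finset.sum_congr rfl fun q _ => ?_
  rw [deriv_const_mul_field, deriv_div_const, Polynomial.deriv, coeff_logS_onePow]

lemma main_aux (G : PowerSeries ℝ) (x : ℝ) (n : ℕ) (hn : 0 < n) :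
    deriv (fun y => (n.factorial : ℝ) * (PowerSeries.coeff n) (G * onePow y)) x =
      (n.factorial : ℝ) *
        ∑ l ∈ Finset.range n,
          ((-1 : ℝ) ^ (n - l - 1) / ((n - l : ℕ) * (l.factorial : ℝ))) *
            ((l.factorial : ℝ) * (PowerSeries.coeff l) (G * onePow x)) := by
  rw [deriv_const_mul_field, deriv_coeff]
  congr 1
  have : G * (logS * onePow x) = (G * onePow x) * logS := by ring
  rw [this, PowerSeries.coeff_mul, Finset.Nat.sum_antidiagonal_eq_sum_range_succ_mk,
    Finset.sum_range_succ]
  have h0 : (PowerSeries.coeff (n - n)) logS = 0 := by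
    simp [logS, Nat.sub_self]
  rw [h0, mul_zero, add_zero]
  refine Finset.sum_congr rfl fun l hl => ?_
  rw [mem_range] at hl
  obtain ⟨d, rfl⟩ : ∃ d, n = l + d + 1 := ⟨n - l - 1, by omega⟩
  have h1 : l + d + 1 - l = d + 1 := by omega
  have h2 : l + d + 1 - l - 1 = d := by omega
  simp only [h1, h2, logS, PowerSeries.coeff_mk, if_neg (Nat.succ_ne_zero d)]
  have := fac_ne l
  have hd1 : ((d:ℝ) + 1) ≠ 0 := by positivity
  push_cast
  rw [pow_succ, pow_succ]
  field_simp

end DerivAux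

theorem deriv_CPhat (k : ℤ) (lam mu x : ℝ) (n : ℕ) (hn : 0 < n) :
    deriv (fun y => CPhat k lam mu y n) x =
      (n.factorial : ℝ) *
        ∑ l ∈ Finset.range n,
          ((-1 : ℝ) ^ (n - l - 1) / ((n - l : ℕ) * (l.factorial : ℝ))) * CPhat k lam mu x l := by
  simp only [CPhat]
  exact DerivAux.main_aux (peters lam mu * compS (Lif k) (-logS)) x n hn
end
end
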